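/- (Positive semidefiniteness of a bordered compound-symmetric matrix.) Let T ≥ 1 and let m, m_T, m_{T+1} ∈ ℝ. Let M be the symmetric (T+1)×(T+1) block matrix [[m·11ᵀ + (1/2)·I, m_T·1],[m_T·1ᵀ, m_{T+1}]], where 1 is the all-ones column vector of length T and I is the T×T identity. Then M is positive semidefinite if and only if: (i) m_{T+1} ≥ 0; (ii) T·m + 1/2 ≥ 0; and (iii) m_{T+1}·(T·m + 1/2) ≥ T·m_T². -/

import Mathlib

lemma quad_form_eval (T : ℕ) (m mT mT1 : ℝ) (x : Fin T ⊕ Unit → ℝ) :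
    dotProduct (star x)
      ((Matrix.fromBlocks
        ((Matrix.of fun (_ _ : Fin T) => m) + (1 / 2 : ℝ) • (1 : Matrix (Fin T) (Fin T) ℝ))
        (Matrix.of fun (_ : Fin T) (_ : Unit) => mT)
        (Matrix.of fun (_ : Unit) (_ : Fin T) => mT)
        (Matrix.of fun (_ : Unit) (_ : Unit) => mT1)).mulVec x) =
      m * (∑ i, x (Sum.inl i))^2 + (1/2) * (∑ i, x (Sum.inl i)^2)
        + 2*mT*(∑ i, x (Sum.inl i)) * x (Sum.inr ()) + mT1 * x (Sum.inr ())^2 := by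
  simp only [dotProduct, Matrix.mulVec, Fintype.sum_sum_type, Matrix.fromBlocks,
    Matrix.of_apply, Matrix.sum_apply, Sum.elim_inl, Sum.elim_inr, Pi.star_apply, star_trivial,
    Matrix.add_apply, Matrix.smul_apply, Matrix.one_apply, smul_eq_mul, mul_ite, mul_zero,
    Finset.sum_add_distrib, mul_add, add_mul, Finset.mul_sum, Finset.sum_mul,
    Finset.sum_ite_eq, Finset.mem_univ, if_true, Finset.univ_unique, Finset.sum_singleton,
    show (default : Unit) = () from rfl]
  have e1 : ∀ i : Fin T, ∑ j : Fin T,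
      x (Sum.inl i) * ((if i = j then (1:ℝ)/2 * 1 else 0) * x (Sum.inl j))
        = 1/2 * x (Sum.inl i)^2 := by
    intro i
    simp_rw [ite_mul, mul_ite, zero_mul, mul_zero, Finset.sum_ite_eq, Finset.mem_univ, if_true]
    ring
  simp_rw [e1]
  have h1 : ∑ i : Fin T, ∑ j : Fin T, x (Sum.inl i) * (m * x (Sum.inl j))
      = m * (∑ i, x (Sum.inl i))^2 := by
    rw [sq, Finset.sum_mul_sum, Finset.mul_sum]
    exact Finset.sum_congr rfl fun i _ => by
      rw [Finset.mul_sum]; exact Finset.sum_congr rfl fun j _ => by ring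
  rw [h1]
  have h3 : (∑ i : Fin T, x (Sum.inr ()) * (mT * x (Sum.inl i)))
      + ∑ i : Fin T, x (Sum.inl i) * (mT * x (Sum.inr ()))
      = ∑ i : Fin T, 2 * mT * x (Sum.inl i) * x (Sum.inr ()) := by
    rw [← Finset.sum_add_distrib]
    exact Finset.sum_congr rfl fun i _ => by ring
  linarith [h3]

/-- Positive semidefiniteness of a bordered compound-symmetric matrix
`M = [[m·11ᵀ + (1/2)·I, mT·1], [mT·1ᵀ, mT1]]`: `M ⪰ 0` iff (i) `mT1 ≥ 0`,
(ii) `T·m + 1/2 ≥ 0`, and (iii) `mT1·(T·m + 1/2) ≥ T·mT²`. -/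
theorem bordered_compound_symmetric_posSemidef_iff (T : ℕ) (hT : 1 ≤ T)
    (m mT mT1 : ℝ) :
    (Matrix.fromBlocks
        ((Matrix.of fun (_ _ : Fin T) => m) + (1 / 2 : ℝ) • (1 : Matrix (Fin T) (Fin T) ℝ))
        (Matrix.of fun (_ : Fin T) (_ : Unit) => mT)
        (Matrix.of fun (_ : Unit) (_ : Fin T) => mT)
        (Matrix.of fun (_ : Unit) (_ : Unit) => mT1)).PosSemidef ↔
      (0 ≤ mT1 ∧ 0 ≤ (T : ℝ) * m + 1 / 2 ∧
        (T : ℝ) * mT ^ 2 ≤ mT1 * ((T : ℝ) * m + 1 / 2)) := by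
  have hT' : (1:ℝ) ≤ (T:ℝ) := by exact_mod_cast hT
  have hTpos : (0:ℝ) < (T:ℝ) := by linarith
  rw [Matrix.posSemidef_iff_dotProduct_mulVec]
  constructor
  · rintro ⟨-, hq⟩
    have key : ∀ x : Fin T ⊕ Unit → ℝ,
        0 ≤ m * (∑ i, x (Sum.inl i))^2 + (1/2) * (∑ i, x (Sum.inl i)^2)
          + 2*mT*(∑ i, x (Sum.inl i)) * x (Sum.inr ()) + mT1 * x (Sum.inr ())^2 := by
      intro x
      have := hq x
      rwa [quad_form_eval] at this
    have h1 : 0 ≤ mT1 := by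
      have := key (Sum.elim 0 1)
      simpa using this
    have h2 : 0 ≤ (T:ℝ) * m + 1/2 := by
      have := key (Sum.elim 1 0)
      simp [Finset.sum_const, Finset.card_univ] at this
      nlinarith
    refine ⟨h1, h2, ?_⟩
    have hdisc : discrim mT1 (2*mT*(T:ℝ)) (m * (T:ℝ)^2 + (T:ℝ)/2) ≤ 0 := by
      apply discrim_le_zero
      intro y
      have := key (Sum.elim 1 (fun _ => y))
      simp [Finset.sum_const, Finset.card_univ] at this
      nlinarith
    rw [discrim] at hdisc
    nlinarith
  · rintro ⟨h1, h2, h3⟩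
    constructor
    · show _ = _
      ext (i|i) (j|j) <;>
        simp [Matrix.conjTranspose_apply, Matrix.fromBlocks, Matrix.one_apply, eq_comm]
    · intro x
      rw [quad_form_eval]
      set S := ∑ i, x (Sum.inl i) with hS
      set Q := ∑ i, x (Sum.inl i)^2 with hQ
      set y := x (Sum.inr ()) with hy
      have hSQ : S^2 ≤ (T:ℝ) * Q := by
        have := sq_sum_le_card_mul_sum_sq (s := (Finset.univ : Finset (Fin T)))
          (f := fun i => x (Sum.inl i))
        simpa [Finset.card_univ] using this
      rcases h2.eq_or_lt with ha | ha
      · have hmT : mT = 0 := by nlinarith [sq_nonneg mT]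
        subst hmT
        nlinarith [mul_nonneg h1 (sq_nonneg y), hTpos]
      · nlinarith [sq_nonneg (((T:ℝ)*m+1/2)*S + (T:ℝ)*mT*y),
          mul_nonneg (sub_nonneg.2 h3) (sq_nonneg y),
          mul_nonneg h2 (sub_nonneg.2 hSQ),
          mul_pos hTpos ha]
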